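/- Fiberwise criterion for column tiles: if A = ⋃_{i=1}^ℓ ({n_i} × I_i) ⊆ Z × (R/Z) is a column tile, then there exists a positive integer m such that every fiber I_i has Lebesgue measure exactly 1/m. -/

import Mathlib

open MeasureTheory

/-- Fiberwise criterion for column tiles. Work in `ℤ × ℝ/ℤ` with counting
measure times Lebesgue (Haar) measure. Let `A = ⋃_{i} {n i} × I i` with the
`n i` distinct and the fibers `I i` measurable of positive measure. If `A` is
a column tile — i.e. there are a finite `C ⊆ ℤ` and a finite nonempty
`Λ ⊆ ℝ/ℤ` with `A ⊆ C × ℝ/ℤ` such that the vertical translates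
`A + (0,λ)`, `λ ∈ Λ`, are pairwise a.e.-disjoint and cover `C × ℝ/ℤ` up to a
null set — then there is `m ≥ 1` with `volume (I i) = 1/m` for every `i`. -/
theorem stmt19 (ℓ : ℕ) (n : Fin ℓ → ℤ) (hn : Function.Injective n)
    (I : Fin ℓ → Set (AddCircle (1 : ℝ))) (hImeas : ∀ i, MeasurableSet (I i))
    (hIpos : ∀ i, volume (I i) ≠ 0)
    (hcol :
      let μ : Measure (ℤ × AddCircle (1 : ℝ)) := Measure.count.prod volume
      let A : Set (ℤ × AddCircle (1 : ℝ)) := ⋃ i, {n i} ×ˢ I i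
      ∃ (C : Finset ℤ) (Λ : Finset (AddCircle (1 : ℝ))), Λ.Nonempty ∧
        A ⊆ (C : Set ℤ) ×ˢ Set.univ ∧
        (∀ l₁ ∈ Λ, ∀ l₂ ∈ Λ, l₁ ≠ l₂ →
          MeasureTheory.AEDisjoint μ
            ((· + ((0 : ℤ), l₁)) '' A) ((· + ((0 : ℤ), l₂)) '' A)) ∧
        μ (((C : Set ℤ) ×ˢ Set.univ) \ ⋃ l ∈ Λ, (· + ((0 : ℤ), l)) '' A) = 0) :
    ∃ m : ℕ, 0 < m ∧ ∀ i, volume (I i) = (m : ENNReal)⁻¹ := by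
  obtain ⟨C, Λ, hΛne, hsub, hdisj, hcov⟩ := hcol
  set μ : Measure (ℤ × AddCircle (1 : ℝ)) := Measure.count.prod volume with hμ
  set A : Set (ℤ × AddCircle (1 : ℝ)) := ⋃ i, {n i} ×ˢ I i with hA
  refine ⟨Λ.card, Finset.card_pos.mpr hΛne, fun i => ?_⟩
  -- slicing principle
  have slice_null : ∀ (S : Set (ℤ × AddCircle (1 : ℝ))) (k : ℤ), μ S = 0 →
      volume (Prod.mk k ⁻¹' S) = 0 := by
    intro S k hS
    have h1 : ({k} : Set ℤ) ×ˢ (Prod.mk k ⁻¹' S) ⊆ S := by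
      rintro ⟨a, b⟩ ⟨ha, hb⟩
      simp only [Set.mem_singleton_iff] at ha
      subst ha; exact hb
    have h2 : μ (({k} : Set ℤ) ×ˢ (Prod.mk k ⁻¹' S)) = volume (Prod.mk k ⁻¹' S) := by
      rw [hμ, Measure.prod_prod, Measure.count_singleton, one_mul]
    have h3 := measure_mono (μ := μ) h1
    rw [hS, h2] at h3
    exact le_antisymm h3 (zero_le)
  -- n i ∈ C
  have hniC : n i ∈ C := by
    obtain ⟨x, hx⟩ := nonempty_of_measure_ne_zero (hIpos i)
    have : (n i, x) ∈ A := Set.mem_iUnion.mpr ⟨i, ⟨rfl, hx⟩⟩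
    exact (hsub this).1
  -- slice of a translate of A at n i
  have slice_img : ∀ l : AddCircle (1 : ℝ),
      Prod.mk (n i) ⁻¹' ((· + ((0 : ℤ), l)) '' A) = (· + l) '' I i := by
    intro l
    ext y
    simp only [Set.mem_preimage, Set.mem_image]
    constructor
    · rintro ⟨⟨pk, py⟩, hp, heq⟩
      rw [hA] at hp
      obtain ⟨j, hj⟩ := Set.mem_iUnion.mp hp
      obtain ⟨hj1, hj2⟩ := hj
      simp only [Set.mem_singleton_iff] at hj1
      have heq1 : pk + 0 = n i := congrArg Prod.fst heq
      have heq2 : py + l = y := congrArg Prod.snd heq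
      rw [add_zero] at heq1
      have : j = i := hn (by rw [← hj1, heq1])
      subst this
      exact ⟨py, hj2, heq2⟩
    · rintro ⟨z, hz, hzy⟩
      exact ⟨(n i, z), Set.mem_iUnion.mpr ⟨i, ⟨rfl, hz⟩⟩, by
        simp only [Prod.mk_add_mk, add_zero, hzy]⟩
  -- the fiber translates cover the circle a.e.
  have hcov' : volume (Set.univ \ ⋃ l ∈ Λ, (· + l) '' I i) = 0 := by
    have := slice_null _ (n i) hcov
    have heq : Prod.mk (n i) ⁻¹'
        ((((C : Set ℤ) ×ˢ Set.univ) : Set (ℤ × AddCircle (1:ℝ))) \ ⋃ l ∈ Λ, (· + ((0 : ℤ), l)) '' A)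
        = Set.univ \ ⋃ l ∈ Λ, (· + l) '' I i := by
      rw [Set.preimage_diff, Set.preimage_iUnion₂]
      congr 1
      · ext y; simp [hniC]
      · exact Set.iUnion₂_congr fun l _ => slice_img l
    rwa [heq] at this
  -- translates are pairwise a.e. disjoint on the fiber
  have hdisj' : (Λ : Set (AddCircle (1:ℝ))).Pairwise
      (Function.onFun (AEDisjoint volume) fun l => (· + l) '' I i) := by
    intro l₁ h₁ l₂ h₂ hne
    have := slice_null _ (n i) (hdisj l₁ h₁ l₂ h₂ hne)
    rw [Set.preimage_inter, slice_img, slice_img] at this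
    exact this
  -- each translate is measurable with the same measure
  have hm : ∀ l : AddCircle (1:ℝ), MeasurableSet ((· + l) '' I i) := by
    intro l
    rw [Set.image_add_right]
    exact (measurable_add_const (-l)) (hImeas i)
  have hvol : ∀ l : AddCircle (1:ℝ), volume ((· + l) '' I i) = volume (I i) := by
    intro l
    rw [Set.image_add_right]
    exact measure_preimage_add_right _ _ _
  -- sum up
  have hsum : volume (⋃ l ∈ Λ, (· + l) '' I i) = Λ.card * volume (I i) := by
    rw [measure_biUnion_finset₀ hdisj' fun l _ => (hm l).nullMeasurableSet]
    simp [hvol, Finset.sum_const, nsmul_eq_mul]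
  have huniv : volume (Set.univ : Set (AddCircle (1:ℝ))) = 1 := by
    simp [AddCircle.measure_univ]
  have hone : (Λ.card : ENNReal) * volume (I i) = 1 := by
    have h1 : volume (⋃ l ∈ Λ, (· + l) '' I i) ≤ 1 := by
      rw [← huniv]; exact measure_mono (Set.subset_univ _)
    have h2 : (1 : ENNReal) ≤ volume (⋃ l ∈ Λ, (· + l) '' I i) := by
      calc (1 : ENNReal) = volume (Set.univ : Set (AddCircle (1:ℝ))) := huniv.symm
        _ ≤ volume ((⋃ l ∈ Λ, (· + l) '' I i) ∪ (Set.univ \ ⋃ l ∈ Λ, (· + l) '' I i)) := by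
            exact measure_mono (fun x _ => by
              by_cases h : x ∈ ⋃ l ∈ Λ, (· + l) '' I i
              · exact Or.inl h
              · exact Or.inr ⟨trivial, h⟩)
        _ ≤ volume (⋃ l ∈ Λ, (· + l) '' I i) + volume (Set.univ \ ⋃ l ∈ Λ, (· + l) '' I i) :=
            measure_union_le _ _
        _ = volume (⋃ l ∈ Λ, (· + l) '' I i) := by rw [hcov', add_zero]
    rw [← hsum]
    exact le_antisymm h1 h2
  have hcard0 : (Λ.card : ENNReal) ≠ 0 := by
    simpa using Finset.card_pos.mpr hΛne |>.ne'
  have hcardtop : (Λ.card : ENNReal) ≠ ⊤ := ENNReal.natCast_ne_top _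
  calc volume (I i) = (Λ.card : ENNReal)⁻¹ * ((Λ.card : ENNReal) * volume (I i)) := by
        rw [← mul_assoc, ENNReal.inv_mul_cancel hcard0 hcardtop, one_mul]
    _ = (Λ.card : ENNReal)⁻¹ := by rw [hone, mul_one]
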